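/- Let G be a group such that for every normal subgroup K of G, every Hausdorff group topology on the quotient G/K is discrete (i.e., G is totally Markov). Then for every group topology τ on G, the closure N_τ of {e_G} in (G, τ) is open; that is, every group topology on G is almost trivial. Conversely, if every group topology on G is almost trivial, then G is totally Markov. -/

import Mathlib

theorem stmt14 (G : Type*) [Group G] :
    (∀ (K : Subgroup G) [K.Normal] (t : TopologicalSpace (G ⧸ K)),
        @IsTopologicalGroup (G ⧸ K) t _ → @T2Space (G ⧸ K) t → t = ⊥) ↔
    (∀ t : TopologicalSpace G, @IsTopologicalGroup G t _ →
        @IsOpen G t (@closure G t {1})) := by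
  constructor
  · intro h t ht
    letI := t; haveI := ht
    set K := (⊥ : Subgroup G).topologicalClosure with hK
    haveI : K.Normal := Subgroup.is_normal_topologicalClosure ⊥
    have hKset : (K : Set G) = closure ({1} : Set G) := by
      rw [Subgroup.topologicalClosure_coe]; congr 1
    haveI : IsClosed (K : Set G) := by rw [hKset]; exact isClosed_closure
    haveI : T2Space (G ⧸ K) := inferInstance
    have hbot := h K instTopologicalSpaceQuotient inferInstance inferInstance
    have hopen1 : @IsOpen (G ⧸ K) instTopologicalSpaceQuotient {(1 : G ⧸ K)} := by
      rw [hbot]; trivial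
    have hopen : IsOpen ((QuotientGroup.mk : G → G ⧸ K) ⁻¹' {1}) :=
      hopen1.preimage continuous_quot_mk
    have hpre : (QuotientGroup.mk : G → G ⧸ K) ⁻¹' {1} = (K : Set G) := by
      ext x
      simp [QuotientGroup.eq_one_iff]
    rw [hpre, hKset] at hopen
    exact hopen
  · intro h K _ t ht h2
    letI := t; haveI := ht; haveI := h2
    letI tG : TopologicalSpace G := t.induced (QuotientGroup.mk : G → G ⧸ K)
    haveI htG : @IsTopologicalGroup G tG _ := topologicalGroup_induced (QuotientGroup.mk' K)
    have hopen := h tG htG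
    have hcl : @closure G tG {1} = (QuotientGroup.mk : G → G ⧸ K) ⁻¹' (closure {(1 : G ⧸ K)}) := by
      have hind : @Topology.IsInducing G (G ⧸ K) tG t (QuotientGroup.mk : G → G ⧸ K) := ⟨rfl⟩
      rw [hind.closure_eq_preimage_closure_image]
      simp
    rw [hcl, closure_singleton] at hopen
    have hpre : (QuotientGroup.mk : G → G ⧸ K) ⁻¹' {1} = (K : Set G) := by
      ext x; simp [QuotientGroup.eq_one_iff]
    rw [hpre] at hopen
    rcases isOpen_induced_iff.mp hopen with ⟨U, hU, hUeq⟩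
    have hUone : U = {(1 : G ⧸ K)} := by
      have hsurj : Function.Surjective (QuotientGroup.mk : G → G ⧸ K) :=
        QuotientGroup.mk'_surjective K
      rw [← Set.image_preimage_eq U hsurj, hUeq]
      ext x
      constructor
      · rintro ⟨g, hg, rfl⟩
        simp only [Set.mem_singleton_iff, QuotientGroup.eq_one_iff]
        exact hg
      · rintro rfl
        exact ⟨1, K.one_mem, rfl⟩
    rw [hUone] at hU
    haveI : DiscreteTopology (G ⧸ K) := discreteTopology_of_isOpen_singleton_one hU
    exact DiscreteTopology.eq_bot
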